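/- Let q be an odd prime power, r ≥ 2 even, N | q^r - 1 with gcd((q^r-1)/(q-1), N) = 2. Then (N/2) divides q - 1. -/
import Mathlib


/-- Eq. (4.6): under the paper's hypotheses, `N/2` divides `q - 1`. -/
theorem half_N_dvd_q_sub_one (q r N : ℕ) (hq : IsPrimePow q) (hodd : Odd q)
    (hr : 2 ≤ r) (hre : Even r) (hN : 0 < N) (hNdvd : N ∣ q ^ r - 1)
    (hgcd : Nat.gcd ((q ^ r - 1) / (q - 1)) N = 2) :
    N / 2 ∣ q - 1 := by
  set s := (q ^ r - 1) / (q - 1) with hs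
  have hdvd : (q - 1) ∣ q ^ r - 1 := by
    simpa using Nat.sub_dvd_pow_sub_pow q 1 r
  have hsmul : s * (q - 1) = q ^ r - 1 := Nat.div_mul_cancel hdvd
  have h2s : 2 ∣ s := hgcd ▸ Nat.gcd_dvd_left _ _
  have h2N : 2 ∣ N := hgcd ▸ Nat.gcd_dvd_right _ _
  have hcop : Nat.Coprime (s / 2) (N / 2) := by
    have := Nat.coprime_div_gcd_div_gcd (m := s) (n := N) (by rw [hgcd]; norm_num)
    rwa [hgcd] at this
  have hNd : N ∣ s * (q - 1) := hsmul ▸ hNdvd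
  obtain ⟨m, hm⟩ := h2N
  obtain ⟨t, ht⟩ := h2s
  have hdd : 2 * m ∣ 2 * (t * (q - 1)) := by
    rw [← hm, ← mul_assoc, ← ht]; exact hNd
  have hmd : m ∣ t * (q - 1) := (mul_dvd_mul_iff_left (by norm_num : (2:ℕ) ≠ 0)).mp hdd
  have hm2 : N / 2 = m := by rw [hm]; omega
  have ht2 : s / 2 = t := by rw [ht]; omega
  rw [hm2]
  rw [hm2, ht2] at hcop
  exact (Nat.Coprime.dvd_of_dvd_mul_left hcop.symm hmd)
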